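/- arXiv:1901.10375 — 4 statements merged into one kernel-verified Lean document; each statement's English description precedes it below -/
import Mathlib

section
/- Let P be a probability generating function with mean m ∈ (0,1), analytic with radius r_P > 1, and let ψ_P > 1 be such that P(z) < z for all z ∈ (1, ψ_P). If G is a power series with nonnegative coefficients, G(0)=0, G(1)=1, satisfying G(P(z)) = m G(z) + 1 - m on the unit disc, and G has radius of convergence r_G > 1, then r_G ≥ ψ_P. -/
open scoped ENNReal NNReal
open Finset

lemma enn_cauchy (a b : ℕ → ℝ≥0∞) (t : ℝ≥0∞) :
    (∑' i, a i * t ^ i) * (∑' k, b k * t ^ k)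
      = ∑' n, (∑ k ∈ Finset.range (n + 1), a k * b (n - k)) * t ^ n := by
  rw [← ENNReal.tsum_mul_right]
  have h1 : ∀ i, (a i * t ^ i) * (∑' k, b k * t ^ k) = ∑' k, (a i * t ^ i) * (b k * t ^ k) :=
    fun i => ENNReal.tsum_mul_left.symm
  simp_rw [h1]
  rw [← ENNReal.tsum_prod]
  rw [← (Finset.HasAntidiagonal.sigmaAntidiagonalEquivProd (A := ℕ)).tsum_eq
    (fun x : ℕ × ℕ => (a x.1 * t ^ x.1) * (b x.2 * t ^ x.2))]
  rw [ENNReal.tsum_sigma']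
  congr 1
  funext n
  simp only [Finset.HasAntidiagonal.sigmaAntidiagonalEquivProd_apply]
  rw [Finset.tsum_subtype (Finset.HasAntidiagonal.antidiagonal n)
    (fun x : ℕ × ℕ => (a x.1 * t ^ x.1) * (b x.2 * t ^ x.2))]
  rw [Finset.Nat.sum_antidiagonal_eq_sum_range_succ_mk, Finset.sum_mul]
  refine Finset.sum_congr rfl fun k hk => ?_
  have hkn : k ≤ n := by simpa using Finset.mem_range_succ_iff.mp hk
  have : t ^ k * t ^ (n - k) = t ^ n := by
    rw [← pow_add]; congr 1; omega
  calc a k * t ^ k * (b (n - k) * t ^ (n - k))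
      = a k * b (n - k) * (t ^ k * t ^ (n - k)) := by ring
    _ = a k * b (n - k) * t ^ n := by rw [this]

noncomputable def coefPow (q : ℕ → ℝ≥0∞) : ℕ → ℕ → ℝ≥0∞
  | 0 => fun n => if n = 0 then 1 else 0
  | (j+1) => fun n => ∑ k ∈ Finset.range (n + 1), q k * coefPow q j (n - k)

lemma coefPow_spec (q : ℕ → ℝ≥0∞) (j : ℕ) (t : ℝ≥0∞) :
    (∑' i, q i * t ^ i) ^ j = ∑' n, coefPow q j n * t ^ n := by
  induction j with
  | zero =>
      rw [pow_zero]
      rw [tsum_eq_single 0 (by intro n hn; simp [coefPow, hn])]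
      simp [coefPow]
  | succ j ih =>
      rw [pow_succ']
      rw [ih, enn_cauchy]
      rfl

lemma comp_series (q gE : ℕ → ℝ≥0∞) (t : ℝ≥0∞) :
    (∑' j, gE j * (∑' i, q i * t ^ i) ^ j)
      = ∑' n, (∑' j, gE j * coefPow q j n) * t ^ n := by
  simp_rw [coefPow_spec q _ t]
  have h1 : ∀ j, gE j * (∑' n, coefPow q j n * t ^ n) = ∑' n, gE j * (coefPow q j n * t ^ n) :=
    fun j => ENNReal.tsum_mul_left.symm
  simp_rw [h1]
  rw [ENNReal.tsum_comm]
  congr 1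
  funext n
  rw [← ENNReal.tsum_mul_right]
  congr 1
  funext j
  ring

lemma ofReal_tsum_ne_top_iff (f : ℕ → ℝ) (hf : ∀ n, 0 ≤ f n) :
    (∑' n, ENNReal.ofReal (f n)) ≠ ⊤ ↔ Summable f := by
  have h : ∀ n, ENNReal.ofReal (f n) = ((f n).toNNReal : ℝ≥0∞) := fun n => rfl
  simp_rw [h]
  rw [ENNReal.tsum_coe_ne_top_iff_summable]
  constructor
  · intro hsm
    have := NNReal.summable_coe.mpr hsm
    convert this using 1
    funext n
    exact (Real.coe_toNNReal _ (hf n)).symm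
  · intro hsm
    rw [← NNReal.summable_coe]
    convert hsm using 1
    funext n
    exact Real.coe_toNNReal _ (hf n)

lemma ofReal_tsum_eq (f : ℕ → ℝ) (hf : ∀ n, 0 ≤ f n) (h : Summable f) :
    (∑' n, ENNReal.ofReal (f n)) = ENNReal.ofReal (∑' n, f n) :=
  (ENNReal.ofReal_tsum_of_nonneg hf h).symm

lemma summable_of_le_radius (a : ℕ → ℝ) (ha : ∀ n, 0 ≤ a n) (t t₀ : ℝ) (ht : 0 ≤ t) (htt : t ≤ t₀)
    (hs : Summable (fun n => a n * t₀ ^ n)) : Summable (fun n => a n * t ^ n) := by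
  refine hs.of_nonneg_of_le (fun n => mul_nonneg (ha n) (pow_nonneg ht n)) (fun n => ?_)
  exact mul_le_mul_of_nonneg_left (pow_le_pow_left₀ ht htt n) (ha n)

lemma shift_summable (b : ℕ → ℝ) (t₀ : ℝ) (ht₀ : 0 < t₀)
    (hsb : Summable (fun n => b n * t₀ ^ n)) : Summable (fun n => b (n+1) * t₀ ^ n) := by
  have h1 : Summable (fun n => b (n+1) * t₀ ^ (n+1)) := (summable_nat_add_iff 1).mpr hsb
  have := h1.mul_right t₀⁻¹
  refine this.congr fun n => ?_
  field_simp
  ring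

lemma coeff_le0 (a b : ℕ → ℝ) (ha : ∀ n, 0 ≤ a n) (hb : ∀ n, 0 ≤ b n) (t₀ : ℝ) (ht₀ : 0 < t₀)
    (hsa : Summable (fun n => a n * t₀ ^ n)) (hsb : Summable (fun n => b n * t₀ ^ n))
    (heqt : ∀ t : ℝ, 0 < t → t ≤ t₀ → (∑' n, a n * t ^ n) = ∑' n, b n * t ^ n) :
    a 0 ≤ b 0 := by
  have hsb' : Summable (fun n => b (n+1) * t₀ ^ n) := shift_summable b t₀ ht₀ hsb
  set K := ∑' n, b (n+1) * t₀ ^ n with hK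
  have hK0 : 0 ≤ K := tsum_nonneg fun n => mul_nonneg (hb _) (pow_nonneg ht₀.le _)
  have key : ∀ t : ℝ, 0 < t → t ≤ t₀ → a 0 ≤ b 0 + t * K := by
    intro t ht htt
    have hsat : Summable (fun n => a n * t ^ n) := summable_of_le_radius a ha t t₀ ht.le htt hsa
    have hsbt : Summable (fun n => b n * t ^ n) := summable_of_le_radius b hb t t₀ ht.le htt hsb
    have h1 : a 0 * t ^ 0 ≤ ∑' n, a n * t ^ n :=
      Summable.le_tsum hsat 0 (fun i _ => mul_nonneg (ha i) (pow_nonneg ht.le i))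
    rw [heqt t ht htt] at h1
    have h2 : (∑' n, b n * t ^ n) = b 0 * t ^ 0 + ∑' n, b (n+1) * t ^ (n+1) :=
      Summable.tsum_eq_zero_add hsbt
    have hsbt' : Summable (fun n => b (n+1) * t ^ n) :=
      summable_of_le_radius (fun n => b (n+1)) (fun n => hb _) t t₀ ht.le htt hsb'
    have h3 : (∑' n, b (n+1) * t ^ (n+1)) = t * ∑' n, b (n+1) * t ^ n := by
      rw [← tsum_mul_left]
      congr 1; funext n; ring
    have h4 : (∑' n, b (n+1) * t ^ n) ≤ K :=
      Summable.tsum_le_tsum (fun n => mul_le_mul_of_nonneg_left (pow_le_pow_left₀ ht.le htt n) (hb _))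
        hsbt' hsb'
    simp only [pow_zero, mul_one] at h1 h2
    nlinarith
  by_contra hlt
  push_neg at hlt
  set ε := (a 0 - b 0) / (K + 1) with hε
  have hK1 : (0:ℝ) < K + 1 := by linarith
  have hε0 : 0 < ε := div_pos (by linarith) hK1
  set t := min t₀ ε with htdef
  have ht : 0 < t := lt_min ht₀ hε0
  have h5 := key t ht (min_le_left _ _)
  have htε : t ≤ ε := min_le_right _ _
  have h6 : a 0 ≤ b 0 + ε * K := le_trans h5 (by nlinarith)
  have h7 : ε * (K + 1) = a 0 - b 0 := div_mul_cancel₀ _ hK1.ne' 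
  nlinarith

lemma coeff_eq0 (a b : ℕ → ℝ) (ha : ∀ n, 0 ≤ a n) (hb : ∀ n, 0 ≤ b n) (t₀ : ℝ) (ht₀ : 0 < t₀)
    (hsa : Summable (fun n => a n * t₀ ^ n)) (hsb : Summable (fun n => b n * t₀ ^ n))
    (heqt : ∀ t : ℝ, 0 < t → t ≤ t₀ → (∑' n, a n * t ^ n) = ∑' n, b n * t ^ n) :
    a 0 = b 0 :=
  le_antisymm (coeff_le0 a b ha hb t₀ ht₀ hsa hsb heqt)
    (coeff_le0 b a hb ha t₀ ht₀ hsb hsa (fun t ht htt => (heqt t ht htt).symm))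

lemma coeff_ext (n : ℕ) : ∀ (a b : ℕ → ℝ), (∀ k, 0 ≤ a k) → (∀ k, 0 ≤ b k) →
    ∀ (t₀ : ℝ), 0 < t₀ → Summable (fun k => a k * t₀ ^ k) → Summable (fun k => b k * t₀ ^ k) →
    (∀ t : ℝ, 0 < t → t ≤ t₀ → (∑' k, a k * t ^ k) = ∑' k, b k * t ^ k) →
    a n = b n := by
  induction n with
  | zero => exact fun a b ha hb t₀ ht₀ hsa hsb heqt => coeff_eq0 a b ha hb t₀ ht₀ hsa hsb heqt
  | succ n ih =>
      intro a b ha hb t₀ ht₀ hsa hsb heqt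
      have h0 : a 0 = b 0 := coeff_eq0 a b ha hb t₀ ht₀ hsa hsb heqt
      have hsa' : Summable (fun k => a (k+1) * t₀ ^ k) := shift_summable a t₀ ht₀ hsa
      have hsb' : Summable (fun k => b (k+1) * t₀ ^ k) := shift_summable b t₀ ht₀ hsb
      refine ih (fun k => a (k+1)) (fun k => b (k+1)) (fun k => ha _) (fun k => hb _)
        t₀ ht₀ hsa' hsb' (fun t ht htt => ?_)
      have hsat : Summable (fun k => a k * t ^ k) := summable_of_le_radius a ha t t₀ ht.le htt hsa
      have hsbt : Summable (fun k => b k * t ^ k) := summable_of_le_radius b hb t t₀ ht.le htt hsb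
      have h2a : (∑' k, a k * t ^ k) = a 0 * t ^ 0 + ∑' k, a (k+1) * t ^ (k+1) :=
        Summable.tsum_eq_zero_add hsat
      have h2b : (∑' k, b k * t ^ k) = b 0 * t ^ 0 + ∑' k, b (k+1) * t ^ (k+1) :=
        Summable.tsum_eq_zero_add hsbt
      have h3a : (∑' k, a (k+1) * t ^ (k+1)) = t * ∑' k, a (k+1) * t ^ k := by
        rw [← tsum_mul_left]; congr 1; funext k; ring
      have h3b : (∑' k, b (k+1) * t ^ (k+1)) = t * ∑' k, b (k+1) * t ^ k := by
        rw [← tsum_mul_left]; congr 1; funext k; ring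
      have := heqt t ht htt
      rw [h2a, h2b, h3a, h3b, h0] at this
      have h5 : t * (∑' k, a (k+1) * t ^ k) = t * ∑' k, b (k+1) * t ^ k := by linarith
      exact mul_left_cancel₀ ht.ne' h5

set_option maxHeartbeats 1000000 in
/-- If `G` (power series with nonnegative coefficients, `G(0)=0`, `G(1)=1`) satisfies the
Schröder equation `G(P(z)) = m G(z) + 1 - m` on the unit disc, has radius of convergence
`r_G > 1`, and `P(x) < x` on `(1, ψ_P)`, then `r_G ≥ ψ_P`. -/
theorem stmt_6 (p : ℕ → ℝ) (hp : ∀ j, 0 ≤ p j) (hS : Summable p) (hsum : ∑' j, p j = 1)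
    (m : ℝ) (hm : m = ∑' j : ℕ, (j : ℝ) * p j) (hm0 : 0 < m) (hm1 : m < 1)
    (ψP : ℝ) (hψ : 1 < ψP)
    (hPlt : ∀ x : ℝ, 1 < x → x < ψP → Summable (fun j => p j * x ^ j) ∧ (∑' j, p j * x ^ j) < x)
    (g : ℕ → ℝ) (hg : ∀ j, 0 ≤ g j) (hg0 : g 0 = 0) (hg1 : ∑' j, g j = 1)
    (heq : ∀ z : ℂ, ‖z‖ ≤ 1 →
      (∑' j : ℕ, (g j : ℂ) * (∑' i : ℕ, (p i : ℂ) * z ^ i) ^ j) =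
        (m : ℂ) * (∑' j : ℕ, (g j : ℂ) * z ^ j) + 1 - (m : ℂ))
    (rG : ℝ) (hrG : 1 < rG)
    (hradius₁ : ∀ r : ℝ, 0 < r → r < rG → Summable (fun j => g j * r ^ j))
    (hradius₂ : ∀ r : ℝ, rG < r → ¬ Summable (fun j => g j * r ^ j)) :
    ψP ≤ rG := by
  classical
  set Pf : ℝ → ℝ := fun t => ∑' i, p i * t ^ i with hPfdef
  have gsum : Summable g := by
    have : g = fun j => g j * (1:ℝ) ^ j := by funext j; simp
    rw [this]
    exact hradius₁ 1 one_pos hrG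
  -- generic conversion of real power sums to ℝ≥0∞
  have conv : ∀ (f : ℕ → ℝ), (∀ n, 0 ≤ f n) → ∀ s : ℝ, 0 ≤ s →
      Summable (fun n => f n * s ^ n) →
      (∑' n, ENNReal.ofReal (f n) * (ENNReal.ofReal s) ^ n)
        = ENNReal.ofReal (∑' n, f n * s ^ n) := by
    intro f hf s hs hsm
    have h1 : ∀ n : ℕ, ENNReal.ofReal (f n) * (ENNReal.ofReal s) ^ n
        = ENNReal.ofReal (f n * s ^ n) := by
      intro n
      rw [← ENNReal.ofReal_pow hs, ← ENNReal.ofReal_mul (hf n)]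
    simp_rw [h1]
    exact ofReal_tsum_eq _ (fun n => mul_nonneg (hf n) (pow_nonneg hs n)) hsm
  set c : ℕ → ℝ≥0∞ :=
    fun n => ∑' j, ENNReal.ofReal (g j) * coefPow (fun i => ENNReal.ofReal (p i)) j n with hcdef
  -- complex functional equation, real form on [0,1]
  have cplx : ∀ t : ℝ, 0 ≤ t → t ≤ 1 →
      (∑' j, g j * (Pf t) ^ j) = m * (∑' j, g j * t ^ j) + 1 - m := by
    intro t ht0 ht1
    have hz : ‖(t : ℂ)‖ ≤ 1 := by
      rw [Complex.norm_real, Real.norm_eq_abs, abs_of_nonneg ht0]; exact ht1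
    have h := heq (t : ℂ) hz
    have hinner : ((Pf t : ℝ) : ℂ) = ∑' i, (p i : ℂ) * (t : ℂ) ^ i := by
      show ((∑' i, p i * t ^ i : ℝ) : ℂ) = _
      rw [Complex.ofReal_tsum]
      exact tsum_congr fun i => by push_cast; ring
    rw [← hinner] at h
    have hL : ((∑' j, g j * Pf t ^ j : ℝ) : ℂ) = ∑' j, (g j : ℂ) * ((Pf t : ℝ) : ℂ) ^ j := by
      rw [Complex.ofReal_tsum]
      exact tsum_congr fun j => by push_cast; ring
    have hR : ((∑' j, g j * t ^ j : ℝ) : ℂ) = ∑' j, (g j : ℂ) * (t : ℂ) ^ j := by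
      rw [Complex.ofReal_tsum]
      exact tsum_congr fun j => by push_cast; ring
    rw [← hL, ← hR] at h
    have h2 : ((∑' j, g j * Pf t ^ j : ℝ) : ℂ) = ((m * (∑' j, g j * t ^ j) + 1 - m : ℝ) : ℂ) := by
      rw [h]; push_cast; ring
    exact_mod_cast h2
  -- the key ENNReal rewriting of the composite series
  have compkey : ∀ t : ℝ, 0 ≤ t → Summable (fun i => p i * t ^ i) →
      Summable (fun j => g j * (Pf t) ^ j) →
      (∑' n, c n * (ENNReal.ofReal t) ^ n)
        = ENNReal.ofReal (∑' j, g j * (Pf t) ^ j) := by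
    intro t ht0 hps hgPs
    have hPt0 : (0:ℝ) ≤ Pf t := tsum_nonneg fun i => mul_nonneg (hp i) (pow_nonneg ht0 i)
    calc (∑' n, c n * (ENNReal.ofReal t) ^ n)
        = ∑' j, ENNReal.ofReal (g j)
            * (∑' i, ENNReal.ofReal (p i) * (ENNReal.ofReal t) ^ i) ^ j :=
          (comp_series (fun i => ENNReal.ofReal (p i)) (fun j => ENNReal.ofReal (g j))
            (ENNReal.ofReal t)).symm
      _ = ∑' j, ENNReal.ofReal (g j) * (ENNReal.ofReal (Pf t)) ^ j := by
          rw [conv p hp t ht0 hps]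
      _ = ENNReal.ofReal (∑' j, g j * (Pf t) ^ j) := conv g hg (Pf t) hPt0 hgPs
  -- the ENNReal identity on (0,1)
  have ennfe : ∀ t : ℝ, 0 < t → t < 1 →
      (∑' n, c n * (ENNReal.ofReal t) ^ n)
        = ENNReal.ofReal (m * (∑' j, g j * t ^ j) + 1 - m) := by
    intro t ht0 ht1
    have hps : Summable (fun i => p i * t ^ i) := by
      refine hS.of_nonneg_of_le (fun i => mul_nonneg (hp i) (pow_nonneg ht0.le i)) fun i => ?_
      have := pow_le_one₀ ht0.le ht1.le (n := i)
      nlinarith [hp i]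
    have hPt0 : (0:ℝ) ≤ Pf t := tsum_nonneg fun i => mul_nonneg (hp i) (pow_nonneg ht0.le i)
    have hPt1 : Pf t ≤ 1 := by
      have h1 : Pf t ≤ ∑' i, p i := by
        refine Summable.tsum_le_tsum (fun i => ?_) hps hS
        have := pow_le_one₀ ht0.le ht1.le (n := i)
        nlinarith [hp i]
      rw [hsum] at h1; exact h1
    have hgPs : Summable (fun j => g j * (Pf t) ^ j) := by
      refine gsum.of_nonneg_of_le (fun j => mul_nonneg (hg j) (pow_nonneg hPt0 j)) fun j => ?_
      have := pow_le_one₀ hPt0 hPt1 (n := j)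
      nlinarith [hg j]
    rw [compkey t ht0.le hps hgPs, cplx t ht0.le ht1.le]
  -- finiteness of the coefficients c
  have hcfin : ∀ n, c n ≠ ⊤ := by
    intro n
    have h12 := ennfe (1/2) (by norm_num) (by norm_num)
    have hterm : c n * (ENNReal.ofReal (1/2)) ^ n
        ≤ ∑' k, c k * (ENNReal.ofReal (1/2)) ^ k := ENNReal.le_tsum n
    rw [h12] at hterm
    have hne : c n * (ENNReal.ofReal (1/2)) ^ n ≠ ⊤ :=
      ne_top_of_le_ne_top ENNReal.ofReal_ne_top hterm
    intro htop
    apply hne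
    rw [htop, ENNReal.top_mul]
    exact pow_ne_zero n (by simp)
  -- the target coefficients
  set b : ℕ → ℝ := fun n => m * g n + if n = 0 then 1 - m else 0 with hbdef
  have hbn0 : b 0 = m * g 0 + (1 - m) := by simp [hbdef]
  have hbns : ∀ n, n ≠ 0 → b n = m * g n := by
    intro n hn; simp [hbdef, if_neg hn]
  have hbnn : ∀ n, 0 ≤ b n := by
    intro n
    rcases eq_or_ne n 0 with hn | hn
    · rw [hn, hbn0]; nlinarith [hg 0]
    · rw [hbns n hn]; nlinarith [hg n]
  have hbval : ∀ t : ℝ, Summable (fun j => g j * t ^ j) →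
      (∑' n, b n * t ^ n) = m * (∑' j, g j * t ^ j) + 1 - m := by
    intro t hgs
    have h1 : Summable (fun n => m * (g n * t ^ n)) := hgs.mul_left m
    have h2 : Summable (fun n => (if n = 0 then 1 - m else 0) * t ^ n) := by
      refine summable_of_ne_finset_zero (s := {0}) fun n hn => ?_
      simp only [Finset.mem_singleton] at hn
      simp [if_neg hn]
    have h3 : (fun n => b n * t ^ n)
        = fun n => m * (g n * t ^ n) + (if n = 0 then 1 - m else 0) * t ^ n := by
      funext n; simp only [hbdef]; ring
    have h4 : (∑' n, (if n = 0 then 1 - m else 0) * t ^ n) = 1 - m := by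
      rw [tsum_eq_single 0 (fun n hn => by simp [if_neg hn])]
      simp
    rw [h3, Summable.tsum_add h1 h2, tsum_mul_left, h4]
    ring
  have hbsum : ∀ t : ℝ, Summable (fun j => g j * t ^ j) → Summable (fun n => b n * t ^ n) := by
    intro t hgs
    have h1 : Summable (fun n => m * (g n * t ^ n)) := hgs.mul_left m
    have h2 : Summable (fun n => (if n = 0 then 1 - m else 0) * t ^ n) := by
      refine summable_of_ne_finset_zero (s := {0}) fun n hn => ?_
      simp only [Finset.mem_singleton] at hn
      simp [if_neg hn]
    refine (h1.add h2).congr fun n => ?_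
    simp only [hbdef]; ring
  -- coefficient identification
  have hcb : ∀ n, c n = ENNReal.ofReal (b n) := by
    set a : ℕ → ℝ := fun n => (c n).toReal with hadef
    have hann : ∀ n, 0 ≤ a n := fun n => ENNReal.toReal_nonneg
    have hval : ∀ t : ℝ, 0 < t → t < 1 → Summable (fun n => a n * t ^ n) ∧
        (∑' n, a n * t ^ n) = m * (∑' j, g j * t ^ j) + 1 - m := by
      intro t ht0 ht1
      have hcn : ∀ n, ENNReal.ofReal (a n * t ^ n) = c n * (ENNReal.ofReal t) ^ n := by
        intro n
        rw [ENNReal.ofReal_mul (hann n), ENNReal.ofReal_pow ht0.le,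
          ENNReal.ofReal_toReal (hcfin n)]
      have h1 : (∑' n, ENNReal.ofReal (a n * t ^ n))
          = ENNReal.ofReal (m * (∑' j, g j * t ^ j) + 1 - m) := by
        simp_rw [hcn]; exact ennfe t ht0 ht1
      have hsm : Summable (fun n => a n * t ^ n) := by
        refine (ofReal_tsum_ne_top_iff _
          (fun n => mul_nonneg (hann n) (pow_nonneg ht0.le n))).mp ?_
        rw [h1]; exact ENNReal.ofReal_ne_top
      refine ⟨hsm, ?_⟩
      have h2 := ofReal_tsum_eq _ (fun n => mul_nonneg (hann n) (pow_nonneg ht0.le n)) hsm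
      rw [h2] at h1
      have hGt : (0:ℝ) ≤ ∑' j, g j * t ^ j :=
        tsum_nonneg fun j => mul_nonneg (hg j) (pow_nonneg ht0.le j)
      exact (ENNReal.ofReal_eq_ofReal_iff
        (tsum_nonneg fun n => mul_nonneg (hann n) (pow_nonneg ht0.le n))
        (by nlinarith)).mp h1
    have hgs12 : Summable (fun j => g j * (2⁻¹ : ℝ) ^ j) :=
      hradius₁ _ (by norm_num) (by norm_num; linarith)
    have heqt : ∀ t : ℝ, 0 < t → t ≤ 2⁻¹ → (∑' n, a n * t ^ n) = ∑' n, b n * t ^ n := by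
      intro t ht0 htt
      have ht1 : t < 1 := by linarith [htt]
      have hgst : Summable (fun j => g j * t ^ j) := hradius₁ t ht0 (by linarith)
      rw [(hval t ht0 ht1).2, hbval t hgst]
    intro n
    have hn := coeff_ext n a b hann hbnn 2⁻¹ (by norm_num)
      (hval 2⁻¹ (by norm_num) (by norm_num)).1 (hbsum _ hgs12) heqt
    rw [← hn, ENNReal.ofReal_toReal (hcfin n)]
  -- the key summability-transfer lemma
  have key : ∀ t : ℝ, 1 ≤ t → Summable (fun i => p i * t ^ i) →
      Summable (fun j => g j * (Pf t) ^ j) → Summable (fun j => g j * t ^ j) := by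
    intro t ht hps hgPs
    have ht0 : (0:ℝ) ≤ t := by linarith
    have e1 := compkey t ht0 hps hgPs
    have hfin : (∑' n, c n * (ENNReal.ofReal t) ^ n) ≠ ⊤ := by
      rw [e1]; exact ENNReal.ofReal_ne_top
    have hle : ENNReal.ofReal m * (∑' n, ENNReal.ofReal (g n) * (ENNReal.ofReal t) ^ n)
        ≤ ∑' n, c n * (ENNReal.ofReal t) ^ n := by
      rw [← ENNReal.tsum_mul_left]
      refine ENNReal.tsum_le_tsum fun n => ?_
      rw [← mul_assoc, ← ENNReal.ofReal_mul hm0.le, hcb n]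
      refine mul_le_mul_left (ENNReal.ofReal_le_ofReal ?_) _
      rcases eq_or_ne n 0 with hn | hn
      · rw [hn, hbn0]; linarith
      · rw [hbns n hn]
    have hmne : ENNReal.ofReal m ≠ 0 := (ENNReal.ofReal_pos.mpr hm0).ne'
    have hgfin : (∑' n, ENNReal.ofReal (g n) * (ENNReal.ofReal t) ^ n) ≠ ⊤ := by
      intro htop
      rw [htop, ENNReal.mul_top hmne] at hle
      exact hfin (top_le_iff.mp hle)
    have h2 : (∑' n, ENNReal.ofReal (g n * t ^ n)) ≠ ⊤ := by
      refine fun htop => hgfin ?_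
      rw [← htop]; congr 1; funext n
      rw [ENNReal.ofReal_mul (hg n), ENNReal.ofReal_pow ht0]
    exact (ofReal_tsum_ne_top_iff _ fun n => mul_nonneg (hg n) (pow_nonneg ht0 n)).mp h2
  -- main argument: iterate P downwards
  by_contra hcon
  push_neg at hcon
  set x : ℝ := (rG + ψP) / 2 with hxdef
  have hx1 : 1 < x := by rw [hxdef]; linarith
  have hxrG : rG < x := by rw [hxdef]; linarith
  have hxψ : x < ψP := by rw [hxdef]; linarith
  obtain ⟨hpx, hPxlt⟩ := hPlt x hx1 hxψ
  have hpsum_le : ∀ t : ℝ, 1 ≤ t → t ≤ x → Summable (fun i => p i * t ^ i) := by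
    intro t h1 h2
    refine hpx.of_nonneg_of_le
      (fun i => mul_nonneg (hp i) (pow_nonneg (by linarith) i)) fun i => ?_
    exact mul_le_mul_of_nonneg_left (pow_le_pow_left₀ (by linarith) h2 i) (hp i)
  have hPge1 : ∀ t : ℝ, 1 ≤ t → t ≤ x → 1 ≤ Pf t := by
    intro t h1 h2
    have h3 : ∑' i, p i ≤ ∑' i, p i * t ^ i := by
      refine Summable.tsum_le_tsum (fun i => ?_) hS (hpsum_le t h1 h2)
      have : (1:ℝ) ≤ t ^ i := one_le_pow₀ h1
      nlinarith [hp i]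
    rw [hsum] at h3
    exact h3
  have hPfx1 : 1 ≤ Pf x := hPge1 x hx1.le le_rfl
  set α : ℝ := (Pf x - 1) / (x - 1) with hαdef
  have hαnn : 0 ≤ α := div_nonneg (by linarith) (by linarith)
  have hα1 : α < 1 := (div_lt_one (by linarith)).mpr (by exact sub_lt_sub_right hPxlt 1)
  -- the contraction estimate
  have hcontr : ∀ t : ℝ, 1 ≤ t → t ≤ x → Pf t - 1 ≤ α * (t - 1) := by
    intro t h1 h2
    have hpt : Summable (fun i => p i * t ^ i) := hpsum_le t h1 h2
    have hsub1 : Summable (fun i => p i * t ^ i - p i) := hpt.sub hS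
    have hsub2 : Summable (fun i => (t - 1) / (x - 1) * (p i * x ^ i - p i)) :=
      (hpx.sub hS).mul_left _
    have hterm : ∀ i : ℕ, p i * t ^ i - p i ≤ (t - 1) / (x - 1) * (p i * x ^ i - p i) := by
      intro i
      have hg1 : t ^ i - 1 = (∑ k ∈ Finset.range i, t ^ k) * (t - 1) := (geom_sum_mul t i).symm
      have hg2 : x ^ i - 1 = (∑ k ∈ Finset.range i, x ^ k) * (x - 1) := (geom_sum_mul x i).symm
      have hsle : (∑ k ∈ Finset.range i, t ^ k) ≤ ∑ k ∈ Finset.range i, x ^ k :=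
        Finset.sum_le_sum fun k _ => pow_le_pow_left₀ (by linarith) h2 k
      have hx1' : (0:ℝ) < x - 1 := by linarith
      have hineq : (t ^ i - 1) * (x - 1) ≤ (x ^ i - 1) * (t - 1) := by
        rw [hg1, hg2]
        have h9 : (0:ℝ) ≤ (t - 1) * (x - 1) := mul_nonneg (by linarith) (by linarith)
        nlinarith [mul_le_mul_of_nonneg_right hsle h9]
      have h5 : p i * ((t ^ i - 1) * (x - 1)) ≤ p i * ((x ^ i - 1) * (t - 1)) :=
        mul_le_mul_of_nonneg_left hineq (hp i)
      rw [div_mul_eq_mul_div, le_div_iff₀ hx1']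
      nlinarith
    have h6 : (∑' i, (p i * t ^ i - p i)) ≤ ∑' i, (t - 1) / (x - 1) * (p i * x ^ i - p i) :=
      Summable.tsum_le_tsum hterm hsub1 hsub2
    have h7 : (∑' i, (p i * t ^ i - p i)) = Pf t - 1 := by
      rw [Summable.tsum_sub hpt hS, hsum]
    have h8 : (∑' i, (t - 1) / (x - 1) * (p i * x ^ i - p i)) = (t - 1) / (x - 1) * (Pf x - 1) := by
      rw [tsum_mul_left, Summable.tsum_sub hpx hS, hsum]
    rw [h7, h8] at h6
    calc Pf t - 1 ≤ (t - 1) / (x - 1) * (Pf x - 1) := h6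
      _ = α * (t - 1) := by rw [hαdef]; field_simp
  -- iterates of Pf
  set X : ℕ → ℝ := fun n => Pf^[n] x with hXdef
  have hX0 : X 0 = x := rfl
  have hXs : ∀ n, X (n + 1) = Pf (X n) := fun n => Function.iterate_succ_apply' Pf n x
  have hXbound : ∀ n, 1 ≤ X n ∧ X n ≤ x ∧ X n - 1 ≤ α ^ n * (x - 1) := by
    intro n
    induction n with
    | zero => rw [hX0]; exact ⟨hx1.le, le_rfl, by simp⟩
    | succ n ih =>
        obtain ⟨h1, h2, h3⟩ := ih
        have hc := hcontr (X n) h1 h2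
        have hge := hPge1 (X n) h1 h2
        have hXn1 : X (n + 1) = Pf (X n) := hXs n
        refine ⟨by rw [hXn1]; exact hge, ?_, ?_⟩
        · rw [hXn1]
          nlinarith [mul_nonneg (sub_nonneg.mpr hα1.le) (sub_nonneg.mpr h1)]
        · rw [hXn1, pow_succ]
          have h10 : α * (X n - 1) ≤ α * (α ^ n * (x - 1)) := mul_le_mul_of_nonneg_left h3 hαnn
          calc Pf (X n) - 1 ≤ α * (X n - 1) := hc
            _ ≤ α * (α ^ n * (x - 1)) := h10
            _ = α ^ n * α * (x - 1) := by ring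
  obtain ⟨N, hN⟩ : ∃ N : ℕ, α ^ N * (x - 1) < rG - 1 := by
    obtain ⟨N, hN⟩ := exists_pow_lt_of_lt_one
      (show (0:ℝ) < (rG - 1) / (x - 1) from div_pos (by linarith) (by linarith)) hα1
    exact ⟨N, (lt_div_iff₀ (by linarith)).mp hN⟩
  have hXN : X N < rG := by have := (hXbound N).2.2; linarith
  have hXNsum : Summable (fun j => g j * (X N) ^ j) :=
    hradius₁ (X N) (by linarith [(hXbound N).1]) hXN
  have down : ∀ k, Summable (fun j => g j * (X (N - k)) ^ j) := by
    intro k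
    induction k with
    | zero => simpa using hXNsum
    | succ k ih =>
        by_cases hk : N - (k + 1) = N - k
        · rw [hk]; exact ih
        · have hstep : N - k = (N - (k + 1)) + 1 := by omega
          have hXeq : X (N - k) = Pf (X (N - (k + 1))) := by rw [hstep, hXs]
          refine key (X (N - (k + 1))) (hXbound _).1
            (hpsum_le _ (hXbound _).1 (hXbound _).2.1) ?_
          rw [← hXeq]
          exact ih
  have hfinal := down N
  simp only [Nat.sub_self] at hfinal
  rw [hX0] at hfinal
  exact hradius₂ x hxrG hfinal
end

section
/- For h > 1: if P and G are h-times differentiable at 1 (from the left) with P'(1) = m ∈ (0,1), G'(1) > 0, and they satisfy the Faà di Bruno relation (m - m^h) G^{(h)}(1) = Σ_{j=1}^{h-1} G^{(j)}(1) B_{h,j}(P'(1),…,P^{(h-j+1)}(1)), then G^{(h)}(1) is finite if and only if P^{(h)}(1) is finite, by induction on h. -/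
open scoped ENNReal

/-- Partial Bell polynomial with values in `ℝ≥0∞` (to accommodate possibly infinite
factorial moments). -/
noncomputable def partialBellE (h j : ℕ) (x : ℕ → ℝ≥0∞) : ℝ≥0∞ :=
  ∑ f : Fin h → Fin (h + 1),
    if (∑ s, (f s : ℕ)) = j ∧ (∑ s : Fin h, (s.1 + 1) * (f s : ℕ)) = h then
      ((h.factorial : ℝ≥0∞) / (∏ s, ((f s : ℕ).factorial : ℝ≥0∞))) *
        ∏ s : Fin h, (x (s.1 + 1) / ((s.1 + 1).factorial : ℝ≥0∞)) ^ (f s : ℕ)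
    else 0

/-- `h`-th factorial moment `∑_{j≥h} j!/(j-h)! a_j` of a nonnegative sequence,
valued in `ℝ≥0∞`. -/
noncomputable def factMoment (a : ℕ → ℝ) (h : ℕ) : ℝ≥0∞ :=
  ∑' j : ℕ, (j.descFactorial h : ℝ≥0∞) * ENNReal.ofReal (a j)

lemma descFactorial_mono_right {j k h : ℕ} (hkh : k ≤ h) (hhj : h ≤ j) :
    j.descFactorial k ≤ j.descFactorial h := by
  induction h with
  | zero =>
    have : k = 0 := Nat.le_zero.mp hkh
    simp [this]
  | succ n ih =>
    rcases Nat.lt_or_ge k (n + 1) with hk | hk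
    · calc j.descFactorial k ≤ j.descFactorial n := ih (by omega) (by omega)
        _ ≤ (j - n) * j.descFactorial n := Nat.le_mul_of_pos_left _ (by omega)
        _ = j.descFactorial (n + 1) := (Nat.descFactorial_succ j n).symm
    · have : k = n + 1 := le_antisymm hkh hk
      simp [this]

lemma factMoment_lt_top_of_le {a : ℕ → ℝ} {k h : ℕ} (hkh : k ≤ h)
    (hfin : factMoment a h < ⊤) : factMoment a k < ⊤ := by
  set r : ℕ → ℝ≥0∞ := fun j => ENNReal.ofReal (a j) with hr
  have hle : factMoment a k ≤
      (∑ j ∈ Finset.range h, (j.descFactorial k : ℝ≥0∞) * r j) + factMoment a h := by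
    calc factMoment a k
        = ∑' j : ℕ, (j.descFactorial k : ℝ≥0∞) * r j := rfl
      _ ≤ ∑' j : ℕ, ((if j < h then (j.descFactorial k : ℝ≥0∞) * r j else 0)
            + (j.descFactorial h : ℝ≥0∞) * r j) := by
          apply ENNReal.tsum_le_tsum
          intro j
          by_cases hj : j < h
          · simp only [hj, if_pos]
            exact le_add_right le_rfl
          · simp only [hj, if_neg, not_false_iff, zero_add]
            exact mul_le_mul_left (Nat.cast_le.mpr
              (descFactorial_mono_right hkh (by omega))) _
      _ = (∑' j : ℕ, if j < h then (j.descFactorial k : ℝ≥0∞) * r j else 0)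
            + factMoment a h := ENNReal.tsum_add
      _ = (∑ j ∈ Finset.range h, (j.descFactorial k : ℝ≥0∞) * r j) + factMoment a h := by
          congr 1
          rw [tsum_eq_sum (s := Finset.range h)
            (by intro b hb; simp [Finset.mem_range] at hb; simp [hb])]
          apply Finset.sum_congr rfl
          intro b hb
          simp [Finset.mem_range.mp hb]
  refine lt_of_le_of_lt hle (ENNReal.add_lt_top.mpr ⟨?_, hfin⟩)
  refine ENNReal.sum_lt_top.mpr fun j _ => ?_
  exact ENNReal.mul_lt_top (ENNReal.natCast_lt_top _) ENNReal.ofReal_lt_top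

lemma le_partialBellE_one {h : ℕ} (hh : 1 ≤ h) (x : ℕ → ℝ≥0∞) :
    x h ≤ partialBellE h 1 x := by
  set f₀ : Fin h → Fin (h + 1) :=
    fun s => if s.1 = h - 1 then ⟨1, by omega⟩ else ⟨0, by omega⟩ with hf₀
  have hval : ∀ s : Fin h, (f₀ s : ℕ) = if s.1 = h - 1 then 1 else 0 := by
    intro s; simp only [hf₀]; split_ifs <;> rfl
  have hs₀ : (⟨h - 1, by omega⟩ : Fin h) ∈ Finset.univ := Finset.mem_univ _
  have hcond1 : (∑ s, (f₀ s : ℕ)) = 1 := by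
    have : ∀ s : Fin h, (f₀ s : ℕ) = if s = (⟨h - 1, by omega⟩ : Fin h) then 1 else 0 := by
      intro s; rw [hval]
      congr 1
      simp [Fin.ext_iff]
    simp only [this]
    rw [Finset.sum_ite_eq' Finset.univ (⟨h - 1, by omega⟩ : Fin h) (fun _ => 1)]
    simp
  have hcond2 : (∑ s : Fin h, (s.1 + 1) * (f₀ s : ℕ)) = h := by
    have : ∀ s : Fin h, (s.1 + 1) * (f₀ s : ℕ)
        = if s = (⟨h - 1, by omega⟩ : Fin h) then h else 0 := by
      intro s; rw [hval]
      by_cases he : s.1 = h - 1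
      · rw [if_pos he, if_pos (Fin.ext he), mul_one]
        omega
      · rw [if_neg he, if_neg (fun hs => he (congrArg Fin.val hs)), mul_zero]
    simp only [this]
    rw [Finset.sum_ite_eq' Finset.univ (⟨h - 1, by omega⟩ : Fin h) (fun _ => h)]
    simp
  have hterm : (if (∑ s, (f₀ s : ℕ)) = 1 ∧ (∑ s : Fin h, (s.1 + 1) * (f₀ s : ℕ)) = h then
      ((h.factorial : ℝ≥0∞) / (∏ s, ((f₀ s : ℕ).factorial : ℝ≥0∞))) *
        ∏ s : Fin h, (x (s.1 + 1) / ((s.1 + 1).factorial : ℝ≥0∞)) ^ (f₀ s : ℕ)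
    else 0) = x h := by
    rw [if_pos ⟨hcond1, hcond2⟩]
    have hden : (∏ s, ((f₀ s : ℕ).factorial : ℝ≥0∞)) = 1 := by
      apply Finset.prod_eq_one
      intro s _
      rw [hval]
      split_ifs <;> simp
    have hprod : (∏ s : Fin h, (x (s.1 + 1) / ((s.1 + 1).factorial : ℝ≥0∞)) ^ (f₀ s : ℕ))
        = x h / (h.factorial : ℝ≥0∞) := by
      have : ∀ s : Fin h, (x (s.1 + 1) / ((s.1 + 1).factorial : ℝ≥0∞)) ^ (f₀ s : ℕ)
          = if s = (⟨h - 1, by omega⟩ : Fin h) then x h / (h.factorial : ℝ≥0∞) else 1 := by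
        intro s; rw [hval]
        by_cases he : s.1 = h - 1
        · have h1 : s.1 + 1 = h := by omega
          rw [if_pos he, pow_one, h1, if_pos (Fin.ext he)]
        · rw [if_neg he, pow_zero, if_neg (fun hs => he (congrArg Fin.val hs))]
      simp only [this]
      rw [Finset.prod_ite_eq' Finset.univ (⟨h - 1, by omega⟩ : Fin h)
        (fun _ => x h / (h.factorial : ℝ≥0∞))]
      simp
    rw [hden, hprod, div_one]
    exact ENNReal.mul_div_cancel (by exact_mod_cast h.factorial_ne_zero)
      (ENNReal.natCast_ne_top _)
  calc x h = _ := hterm.symm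
    _ ≤ partialBellE h 1 x :=
      Finset.single_le_sum (f := fun f : Fin h → Fin (h + 1) =>
        if (∑ s, (f s : ℕ)) = 1 ∧ (∑ s : Fin h, (s.1 + 1) * (f s : ℕ)) = h then
          ((h.factorial : ℝ≥0∞) / (∏ s, ((f s : ℕ).factorial : ℝ≥0∞))) *
            ∏ s : Fin h, (x (s.1 + 1) / ((s.1 + 1).factorial : ℝ≥0∞)) ^ (f s : ℕ)
        else 0) (fun _ _ => zero_le) (Finset.mem_univ f₀)

lemma partialBellE_lt_top {h j : ℕ} {x : ℕ → ℝ≥0∞} (hx : ∀ i, i ≤ h → x i < ⊤) :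
    partialBellE h j x < ⊤ := by
  rw [partialBellE]
  refine ENNReal.sum_lt_top.mpr fun f _ => ?_
  split_ifs with hc
  · apply ENNReal.mul_lt_top
    · refine ENNReal.div_lt_top (ENNReal.natCast_ne_top _) ?_
      rw [Finset.prod_ne_zero_iff]
      intro s _
      exact_mod_cast ((f s : ℕ).factorial_ne_zero)
    · refine ENNReal.prod_lt_top fun s _ => ?_
      rcases Nat.eq_zero_or_pos (f s : ℕ) with h0 | h0
      · simp [h0]
      · apply ENNReal.pow_lt_top
        refine ENNReal.div_lt_top ?_ (by exact_mod_cast (s.1 + 1).factorial_ne_zero)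
        have hle : (s.1 + 1) * (f s : ℕ) ≤ h :=
          calc (s.1 + 1) * (f s : ℕ)
              ≤ ∑ t : Fin h, (t.1 + 1) * (f t : ℕ) := Finset.single_le_sum
                (f := fun t : Fin h => (t.1 + 1) * (f t : ℕ)) (fun _ _ => Nat.zero_le _)
                (Finset.mem_univ s)
            _ = h := hc.2
        exact (hx (s.1 + 1) (by nlinarith)).ne
  · exact ENNReal.zero_lt_top

/-- If the quasi-stationary generating function `G` and the offspring generating function `P`
satisfy the Faà di Bruno relation
`(m - m^h) G^{(h)}(1) = ∑_{j=1}^{h-1} G^{(j)}(1) B_{h,j}(P'(1),…)` for every `h > 1`,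
with `P'(1) = m ∈ (0,1)` and `0 < G'(1) < ∞`, then `G^{(h)}(1)` is finite iff
`P^{(h)}(1)` is finite, for every `h > 1`. -/
theorem stmt_9 (p g : ℕ → ℝ) (hp : ∀ j, 0 ≤ p j) (hg : ∀ j, 0 ≤ g j)
    (m : ℝ) (hm0 : 0 < m) (hm1 : m < 1)
    (hPm : factMoment p 1 = ENNReal.ofReal m)
    (hG1fin : factMoment g 1 < ⊤) (hG1pos : 0 < factMoment g 1)
    (hrel : ∀ h : ℕ, 1 < h →
      ENNReal.ofReal (m - m ^ h) * factMoment g h =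
        ∑ j ∈ Finset.Icc 1 (h - 1),
          factMoment g j * partialBellE h j (fun s => factMoment p s)) :
    ∀ h : ℕ, 1 < h → (factMoment g h < ⊤ ↔ factMoment p h < ⊤) := by
  intro h
  induction h using Nat.strong_induction_on with
  | _ h IH =>
  intro hh
  have hrelh := hrel h hh
  have hcoef : (0 : ℝ) < m - m ^ h := by
    have h1 : m ^ (h - 1) < 1 := pow_lt_one₀ hm0.le hm1 (by omega)
    have h2 : m ^ h = m * m ^ (h - 1) := by
      rw [← pow_succ']
      congr 1
      omega
    nlinarith
  have hcne : ENNReal.ofReal (m - m ^ h) ≠ 0 :=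
    (ENNReal.ofReal_pos.mpr hcoef).ne'
  constructor
  · intro hGfin
    have hsum : (∑ j ∈ Finset.Icc 1 (h - 1),
        factMoment g j * partialBellE h j (fun s => factMoment p s)) < ⊤ := by
      rw [← hrelh]
      exact ENNReal.mul_lt_top ENNReal.ofReal_lt_top hGfin
    have h1mem : 1 ∈ Finset.Icc 1 (h - 1) := by
      simp only [Finset.mem_Icc]
      omega
    have hterm : factMoment g 1 * partialBellE h 1 (fun s => factMoment p s) < ⊤ :=
      lt_of_le_of_lt (Finset.single_le_sum
        (f := fun j => factMoment g j * partialBellE h j (fun s => factMoment p s))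
        (fun _ _ => zero_le) h1mem) hsum
    have hB : partialBellE h 1 (fun s => factMoment p s) < ⊤ :=
      ENNReal.lt_top_of_mul_ne_top_right hterm.ne hG1pos.ne'
    exact lt_of_le_of_lt (le_partialBellE_one (by omega) _) hB
  · intro hPfin
    have hsum : (∑ j ∈ Finset.Icc 1 (h - 1),
        factMoment g j * partialBellE h j (fun s => factMoment p s)) < ⊤ := by
      refine ENNReal.sum_lt_top.mpr fun j hj => ?_
      rw [Finset.mem_Icc] at hj
      have hGj : factMoment g j < ⊤ := by
        rcases eq_or_lt_of_le hj.1 with he | hlt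
        · rw [← he]; exact hG1fin
        · exact (IH j (by omega) hlt).mpr (factMoment_lt_top_of_le (by omega) hPfin)
      exact ENNReal.mul_lt_top hGj
        (partialBellE_lt_top fun i hi => factMoment_lt_top_of_le hi hPfin)
    rw [← hrelh] at hsum
    exact ENNReal.lt_top_of_mul_ne_top_right hsum.ne hcne
end

section
/- (Singular value bound for separated Cauchy matrices) Let x_1,…,x_m and y_1,…,y_n be complex numbers such that for some θ ∈ (0,1) and c ∈ ℂ, |y_j - c| ≤ θ |x_h - c| for all h, j, and let δ = min_h |c - x_h| > 0. Then for every k there exist matrices U ∈ ℂ^{m×k}, V ∈ ℂ^{n×k} such that the Cauchy matrix C with entries C_{hj} = 1/(x_h - y_j) satisfies ‖C - U V*‖₂ ≤ θ^k √(mn) / ((1-θ) δ). -/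
open scoped Matrix Matrix.Norms.L2Operator

lemma aux_opnorm (m n : ℕ) (A : Matrix (Fin m) (Fin n) ℂ) (M : ℝ) (hM : 0 ≤ M)
    (h : ∀ i j, ‖A i j‖ ≤ M) : ‖A‖ ≤ Real.sqrt (m * n) * M := by
  rw [Matrix.l2_opNorm_def]
  apply ContinuousLinearMap.opNorm_le_bound _ (by positivity)
  intro v
  simp only [LinearEquiv.trans_apply, LinearMap.coe_toContinuousLinearMap']
  rw [Matrix.toEuclideanLin_apply]
  set w : Fin n → ℂ := (WithLp.equiv 2 (Fin n → ℂ)) v with hw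
  have hvnorm : ‖v‖ = Real.sqrt (∑ j, ‖w j‖ ^ 2) := by
    rw [EuclideanSpace.norm_eq]; rfl
  have hvn : 0 ≤ ‖v‖ := norm_nonneg v
  have hsumv : ∑ j, ‖w j‖ ≤ Real.sqrt n * ‖v‖ := by
    have h1 : (∑ j, ‖w j‖) ^ 2 ≤ (n : ℝ) * ∑ j, ‖w j‖ ^ 2 := by
      simpa using sq_sum_le_card_mul_sum_sq (s := (Finset.univ : Finset (Fin n)))
        (f := fun j => ‖w j‖)
    have h2 : ∑ j, ‖w j‖ ≤ Real.sqrt ((n : ℝ) * ∑ j, ‖w j‖ ^ 2) :=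
      (Real.le_sqrt (Finset.sum_nonneg fun j _ => norm_nonneg _) (mul_nonneg (Nat.cast_nonneg n) (Finset.sum_nonneg fun j _ => sq_nonneg _))).mpr h1
    calc ∑ j, ‖w j‖ ≤ Real.sqrt ((n : ℝ) * ∑ j, ‖w j‖ ^ 2) := h2
      _ = Real.sqrt n * ‖v‖ := by
          rw [Real.sqrt_mul (Nat.cast_nonneg n), hvnorm]
  have row : ∀ i : Fin m, ‖(A *ᵥ w) i‖ ≤ M * (Real.sqrt n * ‖v‖) := by
    intro i
    calc ‖(A *ᵥ w) i‖ = ‖∑ j, A i j * w j‖ := by simp [Matrix.mulVec, dotProduct]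
      _ ≤ ∑ j, ‖A i j * w j‖ := norm_sum_le _ _
      _ ≤ ∑ j, M * ‖w j‖ := Finset.sum_le_sum fun j _ => by
            rw [norm_mul]; exact mul_le_mul_of_nonneg_right (h i j) (norm_nonneg _)
      _ = M * ∑ j, ‖w j‖ := by rw [Finset.mul_sum]
      _ ≤ M * (Real.sqrt n * ‖v‖) := mul_le_mul_of_nonneg_left hsumv hM
  have lhsnorm : ‖(WithLp.equiv 2 (Fin m → ℂ)).symm (A *ᵥ w)‖
      = Real.sqrt (∑ i, ‖(A *ᵥ w) i‖ ^ 2) := by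
    rw [EuclideanSpace.norm_eq]; rfl
  rw [show ‖WithLp.toLp 2 (A *ᵥ v.ofLp)‖ = _ from lhsnorm]
  have : ∑ i, ‖(A *ᵥ w) i‖ ^ 2 ≤ (m : ℝ) * (M * (Real.sqrt n * ‖v‖)) ^ 2 := by
    calc ∑ i, ‖(A *ᵥ w) i‖ ^ 2 ≤ ∑ _i : Fin m, (M * (Real.sqrt n * ‖v‖)) ^ 2 :=
          Finset.sum_le_sum fun i _ => pow_le_pow_left₀ (norm_nonneg _) (row i) 2
      _ = (m : ℝ) * (M * (Real.sqrt n * ‖v‖)) ^ 2 := by simp [mul_comm]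
  calc Real.sqrt (∑ i, ‖(A *ᵥ w) i‖ ^ 2)
      ≤ Real.sqrt ((m : ℝ) * (M * (Real.sqrt n * ‖v‖)) ^ 2) := Real.sqrt_le_sqrt this
    _ = Real.sqrt m * (M * (Real.sqrt n * ‖v‖)) := by
        rw [Real.sqrt_mul (Nat.cast_nonneg m), Real.sqrt_sq (mul_nonneg hM (mul_nonneg (Real.sqrt_nonneg _) hvn))]
    _ = Real.sqrt (m * n) * M * ‖v‖ := by
        rw [Real.sqrt_mul (Nat.cast_nonneg m)]; ring

lemma geom_err (k : ℕ) (a b : ℂ) (ha : a ≠ 0) (hab : a - b ≠ 0) (hr : b * a⁻¹ ≠ 1) :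
    (a - b)⁻¹ - (∑ i ∈ Finset.range k, (b * a⁻¹) ^ i) * a⁻¹ = (b * a⁻¹) ^ k * (a - b)⁻¹ := by
  rw [geom_sum_eq hr]
  have key : (b * a⁻¹ - 1)⁻¹ * a⁻¹ = -(a - b)⁻¹ := by
    rw [← mul_inv, show (b * a⁻¹ - 1) * a = b - a by field_simp, ← neg_sub a b, inv_neg]
  rw [div_eq_mul_inv, mul_assoc, key]
  ring

/-- Singular value bound for `(θ,c)`-separated Cauchy matrices: if
`|y_j - c| ≤ θ |x_h - c|` for all `h, j` and `δ = min_h |c - x_h| > 0`, then for every `k`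
there is a rank-`k` factorization `U Vᴴ` with
`‖C - U Vᴴ‖₂ ≤ θ^k √(mn) / ((1-θ) δ)` for the Cauchy matrix `C_{hj} = (x_h - y_j)⁻¹`. -/
theorem stmt_13 (m n : ℕ) (hm : 0 < m) (x : Fin m → ℂ) (y : Fin n → ℂ)
    (θ : ℝ) (hθ0 : 0 < θ) (hθ1 : θ < 1) (c : ℂ)
    (hsep : ∀ (h : Fin m) (j : Fin n), ‖y j - c‖ ≤ θ * ‖x h - c‖)
    (δ : ℝ) (hδ : δ = Finset.univ.inf' (Finset.univ_nonempty_iff.mpr ⟨⟨0, hm⟩⟩)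
      (fun h : Fin m => ‖c - x h‖))
    (hδpos : 0 < δ)
    (C : Matrix (Fin m) (Fin n) ℂ) (hC : ∀ h j, C h j = (x h - y j)⁻¹) (k : ℕ) :
    ∃ (U : Matrix (Fin m) (Fin k) ℂ) (V : Matrix (Fin n) (Fin k) ℂ),
      ‖C - U * Vᴴ‖ ≤ θ ^ k * Real.sqrt (m * n) / ((1 - θ) * δ) := by
  have hθ1' : (0:ℝ) < 1 - θ := by linarith
  -- δ is a lower bound for ‖x h - c‖
  have hδle : ∀ h : Fin m, δ ≤ ‖x h - c‖ := by
    intro h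
    have : δ ≤ ‖c - x h‖ := hδ ▸ Finset.inf'_le _ (Finset.mem_univ h)
    simpa [norm_sub_rev] using this
  have hxc : ∀ h : Fin m, x h - c ≠ 0 := fun h => by
    intro h0
    have := hδle h; rw [h0, norm_zero] at this; linarith
  refine ⟨fun h i => ((x h - c)⁻¹) ^ ((i : ℕ) + 1),
    fun j i => starRingEnd ℂ ((y j - c) ^ (i : ℕ)), ?_⟩
  set U : Matrix (Fin m) (Fin k) ℂ := fun h i => ((x h - c)⁻¹) ^ ((i : ℕ) + 1)
  set V : Matrix (Fin n) (Fin k) ℂ := fun j i => starRingEnd ℂ ((y j - c) ^ (i : ℕ))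
  -- entrywise bound
  set M : ℝ := θ ^ k / ((1 - θ) * δ) with hM
  have hMnn : 0 ≤ M := by positivity
  have entry : ∀ h j, ‖(C - U * Vᴴ) h j‖ ≤ M := by
    intro h j
    set a : ℂ := x h - c with ha
    set b : ℂ := y j - c with hb
    have ha0 : a ≠ 0 := hxc h
    have hab : a - b = x h - y j := by rw [ha, hb]; ring
    have hba : ‖b‖ ≤ θ * ‖a‖ := hsep h j
    have habn : (1 - θ) * δ ≤ ‖a - b‖ := by
      have h1 : ‖a‖ - ‖b‖ ≤ ‖a - b‖ := norm_sub_norm_le a b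
      have h2 : (1 - θ) * ‖a‖ ≤ ‖a‖ - ‖b‖ := by nlinarith [hδle h]
      have h3 : (1 - θ) * δ ≤ (1 - θ) * ‖a‖ :=
        mul_le_mul_of_nonneg_left (hδle h) (le_of_lt hθ1')
      linarith
    have hab0 : a - b ≠ 0 := by
      intro h0; rw [h0, norm_zero] at habn; nlinarith
    have hr1 : b * a⁻¹ ≠ 1 := by
      intro h1
      have hba' : b = a := by
        have := congrArg (· * a) h1
        simpa [mul_assoc, inv_mul_cancel₀ ha0] using this
      exact hab0 (by rw [hba']; ring)
    -- entry value
    have hentry : (C - U * Vᴴ) h j = (b * a⁻¹) ^ k * (a - b)⁻¹ := by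
      have hUV : (U * Vᴴ) h j = ∑ i ∈ Finset.range k, b ^ i * (a⁻¹) ^ (i + 1) := by
        rw [Matrix.mul_apply]
        rw [← Fin.sum_univ_eq_sum_range (fun i => b ^ i * (a⁻¹) ^ (i + 1)) k]
        refine Finset.sum_congr rfl fun i _ => ?_
        rw [Matrix.conjTranspose_apply]
        simp [U, V, Matrix.conjTranspose_apply, ha, hb, mul_comm]
      have hsum : ∑ i ∈ Finset.range k, b ^ i * (a⁻¹) ^ (i + 1)
          = (∑ i ∈ Finset.range k, (b * a⁻¹) ^ i) * a⁻¹ := by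
        rw [Finset.sum_mul]
        exact Finset.sum_congr rfl fun i _ => by rw [mul_pow, pow_succ]; ring
      rw [Matrix.sub_apply, hC, hUV, hsum, ← hab]
      exact geom_err k a b ha0 hab0 hr1
    rw [hentry, norm_mul, norm_pow, norm_mul, norm_inv, norm_inv]
    have h1 : ‖b‖ * ‖a‖⁻¹ ≤ θ := by
      have hane : (0:ℝ) < ‖a‖ := norm_pos_iff.mpr ha0
      have := (div_le_iff₀ hane).mpr hba
      simpa [div_eq_mul_inv] using this
    have h2 : ‖a - b‖⁻¹ ≤ ((1 - θ) * δ)⁻¹ :=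
      inv_anti₀ (by positivity) habn
    calc (‖b‖ * ‖a‖⁻¹) ^ k * ‖a - b‖⁻¹ ≤ θ ^ k * ((1 - θ) * δ)⁻¹ := by
          apply mul_le_mul (pow_le_pow_left₀ (by positivity) h1 k) h2 (by positivity)
          positivity
      _ = M := by rw [hM]; ring
  have := aux_opnorm m n (C - U * Vᴴ) M hMnn entry
  calc ‖C - U * Vᴴ‖ ≤ Real.sqrt (m * n) * M := this
    _ = θ ^ k * Real.sqrt (m * n) / ((1 - θ) * δ) := by rw [hM]; ring
end

section
/- Let P be a probability generating function with nonnegative coefficients, P(1) = 1, mean m ∈ (0,1), and let r > 1 satisfy r > P(r). Let ξ_h = exp(2πih/n) and let C be the n×n Cauchy matrix with entries (r ξ_h - P(r ξ_j))^{-1}. Then for k = 1,…,n-1, the (k+1)-st singular value satisfies σ_{k+1}(C) ≤ θ^k n / ((1-θ)(r - p_0)), where θ = (P(r) - p_0)/(r - p_0) ∈ (0,1). -/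
open scoped Matrix Matrix.Norms.L2Operator
set_option maxHeartbeats 1000000


lemma l2norm_le_card_mul_sup {n : ℕ} (A : Matrix (Fin n) (Fin n) ℂ) (M : ℝ) (hM : 0 ≤ M)
    (h : ∀ i j, ‖A i j‖ ≤ M) : ‖A‖ ≤ n * M := by
  rw [Matrix.l2_opNorm_def]
  apply ContinuousLinearMap.opNorm_le_bound _ (by positivity)
  intro x
  have hconv : ((Matrix.toEuclideanLin ≪≫ₗ LinearMap.toContinuousLinearMap) A) x
      = (WithLp.equiv 2 (Fin n → ℂ)).symm (A *ᵥ (WithLp.equiv 2 (Fin n → ℂ)) x) := rfl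
  rw [hconv]
  set y : EuclideanSpace ℂ (Fin n) :=
    (WithLp.equiv 2 (Fin n → ℂ)).symm (A *ᵥ (WithLp.equiv 2 (Fin n → ℂ)) x) with hy
  have hx2 : ∑ j, ‖x j‖ ^ 2 = ‖x‖ ^ 2 := by
    rw [EuclideanSpace.norm_eq, Real.sq_sqrt (by positivity)]
  have hS : (∑ j, ‖x j‖) ^ 2 ≤ n * ‖x‖ ^ 2 := by
    have h0 := sq_sum_le_card_mul_sum_sq (s := Finset.univ) (f := fun j => ‖x j‖)
    simp only [Finset.card_univ, Fintype.card_fin] at h0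
    rw [← hx2]; exact_mod_cast h0
  have hrow : ∀ i, ‖y i‖ ≤ M * ∑ j, ‖x j‖ := by
    intro i
    have : y i = ∑ j, A i j * x j := rfl
    rw [this]
    calc ‖∑ j, A i j * x j‖ ≤ ∑ j, ‖A i j * x j‖ := norm_sum_le _ _
      _ ≤ ∑ j, M * ‖x j‖ := by
          refine Finset.sum_le_sum fun j _ => ?_
          rw [norm_mul]
          exact mul_le_mul_of_nonneg_right (h i j) (norm_nonneg _)
      _ = M * ∑ j, ‖x j‖ := by rw [Finset.mul_sum]
  have hy2 : ‖y‖ ^ 2 ≤ (n * M * ‖x‖) ^ 2 := by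
    have : ‖y‖ ^ 2 = ∑ i, ‖y i‖ ^ 2 := by
      rw [EuclideanSpace.norm_eq, Real.sq_sqrt (by positivity)]
    rw [this]
    calc ∑ i, ‖y i‖ ^ 2 ≤ ∑ _i : Fin n, (M * ∑ j, ‖x j‖) ^ 2 := by
          refine Finset.sum_le_sum fun i _ => ?_
          exact pow_le_pow_left₀ (norm_nonneg _) (hrow i) 2
      _ = n * (M ^ 2 * (∑ j, ‖x j‖) ^ 2) := by
          rw [Finset.sum_const]; simp [mul_pow]
      _ ≤ n * (M ^ 2 * (n * ‖x‖ ^ 2)) := by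
          refine mul_le_mul_of_nonneg_left (mul_le_mul_of_nonneg_left hS (by positivity)) (by positivity)
      _ = (n * M * ‖x‖) ^ 2 := by ring
  nlinarith [norm_nonneg y, mul_nonneg (mul_nonneg (Nat.cast_nonneg (α := ℝ) n) hM) (norm_nonneg x)]

/-- The `(k+1)`-st singular value of a matrix, characterized via Eckart–Young as the
distance (in spectral norm) to the set of matrices of rank at most `k`. -/
noncomputable def singValSucc (n : ℕ) (C : Matrix (Fin n) (Fin n) ℂ) (k : ℕ) : ℝ :=
  sInf {t : ℝ | ∃ B : Matrix (Fin n) (Fin n) ℂ, B.rank ≤ k ∧ t = ‖C - B‖}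

/-- Singular value decay of the discretized Cauchy matrix
`C_{jh} = (r ξ_h - P(r ξ_j))⁻¹` at the scaled `n`-th roots of unity:
`σ_{k+1}(C) ≤ θ^k n / ((1-θ)(r - p_0))` with `θ = (P(r) - p_0)/(r - p_0)`. -/
theorem stmt_14 (n : ℕ) (hn : 0 < n) (p : ℕ → ℝ) (hp : ∀ j, 0 ≤ p j)
    (hsum : ∑' j, p j = 1)
    (hmean : 0 < (∑' j : ℕ, (j : ℝ) * p j) ∧ (∑' j : ℕ, (j : ℝ) * p j) < 1)
    (r : ℝ) (hr : 1 < r) (hSr : Summable (fun j => p j * r ^ j))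
    (hrP : (∑' j, p j * r ^ j) < r)
    (ξ : Fin n → ℂ) (hξ : ∀ h : Fin n, ξ h = Complex.exp (2 * Real.pi * Complex.I * (h : ℕ) / n))
    (C : Matrix (Fin n) (Fin n) ℂ)
    (hC : ∀ j h : Fin n, C j h = (r * ξ h - ∑' i : ℕ, (p i : ℂ) * (r * ξ j) ^ i)⁻¹)
    (θ : ℝ) (hθ : θ = ((∑' j, p j * r ^ j) - p 0) / (r - p 0)) :
    ∀ k : ℕ, 1 ≤ k → k ≤ n - 1 →
      singValSucc n C k ≤ θ ^ k * n / ((1 - θ) * (r - p 0)) := by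
  intro k hk1 hkn
  have hr0 : (0:ℝ) < r := lt_trans one_pos hr
  set Pr : ℝ := ∑' j, p j * r ^ j with hPrdef
  have hterm : ∀ j, p j ≤ p j * r ^ j := by
    intro j
    exact le_mul_of_one_le_right (hp j) (one_le_pow₀ hr.le)
  have hsp : Summable p := Summable.of_nonneg_of_le hp hterm hSr
  have hp01 : p 0 ≤ 1 := hsum ▸ Summable.le_tsum hsp 0 (fun i _ => hp i)
  have hp0Pr : p 0 ≤ Pr := by
    have := Summable.le_tsum hSr 0 (fun i _ => mul_nonneg (hp i) (by positivity))
    simpa using this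
  have hp0r : p 0 < r := lt_of_le_of_lt hp01 hr
  have hden : (0:ℝ) < r - p 0 := by linarith
  have hθ0 : 0 ≤ θ := by rw [hθ]; exact div_nonneg (by linarith) hden.le
  have hθ1 : θ < 1 := by rw [hθ, div_lt_one hden]; linarith
  have hθeq : θ * (r - p 0) = Pr - p 0 := by
    rw [hθ]; field_simp
  have hdpos : (0:ℝ) < (1 - θ) * (r - p 0) := mul_pos (by linarith) hden
  -- the values y j = P(r ξ j)
  set y : Fin n → ℂ := fun j => ∑' i : ℕ, (p i : ℂ) * ((r:ℂ) * ξ j) ^ i with hy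
  have hCy : ∀ j h, C j h = ((r:ℂ) * ξ h - y j)⁻¹ := by
    intro j h; rw [hC j h]
  have hξ1 : ∀ h : Fin n, ‖ξ h‖ = 1 := by
    intro h; rw [hξ h]
    have he : 2 * (Real.pi:ℂ) * Complex.I * ((h:ℕ):ℂ) / (n:ℂ)
        = ((2 * Real.pi * ((h:ℕ):ℝ) / (n:ℝ) : ℝ) : ℂ) * Complex.I := by
      push_cast; ring
    rw [he, Complex.norm_exp_ofReal_mul_I]
  have hxnorm : ∀ h : Fin n, ‖(r:ℂ) * ξ h‖ = r := by
    intro h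
    rw [norm_mul, hξ1 h, mul_one, Complex.norm_real, Real.norm_eq_abs, abs_of_pos hr0]
  have hnormterm : ∀ (j : Fin n) (i : ℕ), ‖(p i : ℂ) * ((r:ℂ) * ξ j) ^ i‖ = p i * r ^ i := by
    intro j i
    rw [norm_mul, norm_pow, hxnorm j, Complex.norm_real, Real.norm_eq_abs, abs_of_nonneg (hp i)]
  have hsC : ∀ j : Fin n, Summable (fun i => (p i : ℂ) * ((r:ℂ) * ξ j) ^ i) := by
    intro j
    apply Summable.of_norm
    simpa only [hnormterm j] using hSr
  -- tail bound
  have hyb : ∀ j, ‖y j - (p 0 : ℂ)‖ ≤ Pr - p 0 := by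
    intro j
    have h1 : y j = (p 0 : ℂ) * ((r:ℂ) * ξ j) ^ (0:ℕ)
        + ∑' i : ℕ, (p (i+1) : ℂ) * ((r:ℂ) * ξ j) ^ (i+1) :=
      Summable.tsum_eq_zero_add (hsC j)
    have h2 : Pr = p 0 * r ^ (0:ℕ) + ∑' i : ℕ, p (i+1) * r ^ (i+1) :=
      Summable.tsum_eq_zero_add hSr
    have hshift : Summable (fun i => p (i+1) * r ^ (i+1)) :=
      (summable_nat_add_iff 1).2 hSr
    have hshiftC : Summable (fun i => ‖(p (i+1) : ℂ) * ((r:ℂ) * ξ j) ^ (i+1)‖) := by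
      simpa only [hnormterm j] using hshift
    have h3 : y j - (p 0 : ℂ) = ∑' i : ℕ, (p (i+1) : ℂ) * ((r:ℂ) * ξ j) ^ (i+1) := by
      rw [h1]; push_cast; ring
    rw [h3]
    calc ‖∑' i : ℕ, (p (i+1) : ℂ) * ((r:ℂ) * ξ j) ^ (i+1)‖
        ≤ ∑' i : ℕ, ‖(p (i+1) : ℂ) * ((r:ℂ) * ξ j) ^ (i+1)‖ := norm_tsum_le_tsum_norm hshiftC
      _ = ∑' i : ℕ, p (i+1) * r ^ (i+1) := by simp only [hnormterm j]
      _ = Pr - p 0 := by rw [h2]; ring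
  -- shifted points
  set w : Fin n → ℂ := fun j => y j - (p 0 : ℂ) with hw
  set xc : Fin n → ℂ := fun h => (r:ℂ) * ξ h - (p 0 : ℂ) with hxc
  have hwb : ∀ j, ‖w j‖ ≤ θ * (r - p 0) := by
    intro j; rw [hθeq]; exact hyb j
  have hxcn : ∀ h, r - p 0 ≤ ‖xc h‖ := by
    intro h
    calc r - p 0 = ‖(r:ℂ) * ξ h‖ - ‖(p 0 : ℂ)‖ := by
          rw [hxnorm h, Complex.norm_real, Real.norm_eq_abs, abs_of_nonneg (hp 0)]
      _ ≤ ‖(r:ℂ) * ξ h - (p 0 : ℂ)‖ := norm_sub_norm_le _ _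
      _ = ‖xc h‖ := rfl
  have hxc0 : ∀ h, xc h ≠ 0 := by
    intro h hc
    have := hxcn h; rw [hc, norm_zero] at this; linarith
  have hdn : ∀ j h, (1 - θ) * (r - p 0) ≤ ‖(r:ℂ) * ξ h - y j‖ := by
    intro j h
    have he : (r:ℂ) * ξ h - y j = xc h - w j := by simp only [hxc, hw]; ring
    rw [he]
    calc (1 - θ) * (r - p 0) = (r - p 0) - θ * (r - p 0) := by ring
      _ ≤ ‖xc h‖ - ‖w j‖ := sub_le_sub (hxcn h) (hwb j)
      _ ≤ ‖xc h - w j‖ := norm_sub_norm_le _ _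
  have hdne : ∀ j h, (r:ℂ) * ξ h - y j ≠ 0 := by
    intro j h hc
    have := hdn j h; rw [hc, norm_zero] at this; linarith
  -- the rank-k approximation
  set B : Matrix (Fin n) (Fin n) ℂ :=
    Matrix.of fun j h => ∑ m ∈ Finset.range k, w j ^ m * ((xc h)⁻¹) ^ (m+1) with hB
  have hBfact : B = (Matrix.of fun (j : Fin n) (m : Fin k) => w j ^ (m:ℕ))
      * (Matrix.of fun (m : Fin k) (h : Fin n) => ((xc h)⁻¹) ^ ((m:ℕ)+1)) := by
    ext j h
    rw [Matrix.mul_apply]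
    simp only [hB, Matrix.of_apply]
    exact (Fin.sum_univ_eq_sum_range (fun m => w j ^ m * ((xc h)⁻¹) ^ (m+1)) k).symm
  have hrank : B.rank ≤ k := by
    rw [hBfact]
    exact le_trans (Matrix.rank_mul_le_left _ _)
      (le_trans (Matrix.rank_le_card_width _) (by simp))
  -- entrywise error
  have key : ∀ j h, C j h - B j h
      = (w j * (xc h)⁻¹) ^ k * ((r:ℂ) * ξ h - y j)⁻¹ := by
    intro j h
    have hx0 := hxc0 h
    have hd0 := hdne j h
    have hρ : w j * (xc h)⁻¹ ≠ 1 := by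
      intro hc
      rw [mul_inv_eq_one₀ hx0] at hc
      apply hd0
      have : (r:ℂ) * ξ h - y j = xc h - w j := by simp only [hxc, hw]; ring
      rw [this, hc, sub_self]
    have hBjh : B j h = ((w j * (xc h)⁻¹) ^ k - 1) / (w j * (xc h)⁻¹ - 1) * (xc h)⁻¹ := by
      simp only [hB, Matrix.of_apply]
      rw [← geom_sum_eq hρ k, Finset.sum_mul]
      refine Finset.sum_congr rfl fun m _ => ?_
      rw [mul_pow, pow_succ]
      ring
    have hdw : (r:ℂ) * ξ h - y j = xc h - w j := by simp only [hxc, hw]; ring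
    rw [hCy j h, hBjh, hdw]
    have e1 : (w j * (xc h)⁻¹ - 1) * xc h = w j - xc h := by
      field_simp
    have e2 : ((w j * (xc h)⁻¹) ^ k - 1) / (w j * (xc h)⁻¹ - 1) * (xc h)⁻¹
        = ((w j * (xc h)⁻¹) ^ k - 1) * ((w j * (xc h)⁻¹ - 1) * xc h)⁻¹ := by
      rw [mul_inv, div_eq_mul_inv]; ring
    rw [e2, e1, ← neg_sub (xc h) (w j), inv_neg]
    ring
  have hentry : ∀ j h, ‖(C - B) j h‖ ≤ θ ^ k * ((1 - θ) * (r - p 0))⁻¹ := by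
    intro j h
    rw [Matrix.sub_apply, key j h, norm_mul, norm_pow, norm_inv]
    have hρb : ‖w j * (xc h)⁻¹‖ ≤ θ := by
      rw [norm_mul, norm_inv]
      have h1 : ‖w j‖ ≤ θ * ‖xc h‖ :=
        le_trans (hwb j) (mul_le_mul_of_nonneg_left (hxcn h) hθ0)
      have h2 : (0:ℝ) < ‖xc h‖ := lt_of_lt_of_le hden (hxcn h)
      rw [← div_eq_mul_inv, div_le_iff₀ h2]
      exact h1
    have hdb : ‖(r:ℂ) * ξ h - y j‖⁻¹ ≤ ((1 - θ) * (r - p 0))⁻¹ :=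
      inv_anti₀ hdpos (hdn j h)
    exact mul_le_mul (pow_le_pow_left₀ (norm_nonneg _) hρb k) hdb
      (inv_nonneg.2 (norm_nonneg _)) (by positivity)
  -- conclude
  have hbdd : BddBelow {t : ℝ | ∃ B' : Matrix (Fin n) (Fin n) ℂ, B'.rank ≤ k ∧ t = ‖C - B'‖} := by
    refine ⟨0, fun t ht => ?_⟩
    obtain ⟨B', _, rfl⟩ := ht
    exact norm_nonneg _
  have hle : singValSucc n C k ≤ ‖C - B‖ := csInf_le hbdd ⟨B, hrank, rfl⟩
  have hnorm : ‖C - B‖ ≤ n * (θ ^ k * ((1 - θ) * (r - p 0))⁻¹) :=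
    l2norm_le_card_mul_sup _ _ (by positivity) hentry
  calc singValSucc n C k ≤ ‖C - B‖ := hle
    _ ≤ n * (θ ^ k * ((1 - θ) * (r - p 0))⁻¹) := hnorm
    _ = θ ^ k * n / ((1 - θ) * (r - p 0)) := by ring
end
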